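/- Let A be a Hermitian commutative unital complex *-algebra and let S be the ℂ-linear span of the unitary group of A. Then every element of A is a fraction of elements of S: for every a ∈ A there exist b, c ∈ S with c invertible in A and c * a = b (equivalently a = c⁻¹ * b). -/

import Mathlib

open Submodule

private lemma span_unitary_mul_mem {A : Type*} [CommRing A] [Algebra ℂ A] [StarRing A]
    {b c : A} (hb : b ∈ Submodule.span ℂ ((unitary A : Set A)))
    (hc : c ∈ Submodule.span ℂ ((unitary A : Set A))) :
    b * c ∈ Submodule.span ℂ ((unitary A : Set A)) := by
  have h : Submodule.span ℂ ((unitary A : Set A)) * Submodule.span ℂ ((unitary A : Set A)) ≤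
      Submodule.span ℂ ((unitary A : Set A)) := by
    rw [Submodule.span_mul_span]
    apply Submodule.span_le.2
    rintro x ⟨u, hu, v, hv, rfl⟩
    exact Submodule.subset_span (mul_mem hu hv)
  exact h (Submodule.mul_mem_mul hb hc)

private lemma key_selfadjoint {A : Type*} [CommRing A] [Algebra ℂ A] [StarRing A]
    [StarModule ℂ A]
    (hHerm : ∀ a : A, star a = a → ∀ z ∈ spectrum ℂ a, z.im = 0)
    (x : A) (hx : star x = x) :
    ∃ b c : A, b ∈ Submodule.span ℂ ((unitary A : Set A)) ∧
      c ∈ Submodule.span ℂ ((unitary A : Set A)) ∧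
      IsUnit c ∧ c * x = b := by
  set J : A := algebraMap ℂ A Complex.I with hJ
  have hstarJ : star J = -J := by
    rw [hJ, ← algebraMap_star_comm, Complex.star_def, Complex.conj_I, map_neg]
  -- x + J is a unit
  have hnotmem : (-Complex.I) ∉ spectrum ℂ x := by
    intro h
    have := hHerm x hx _ h
    simp at this
  have hu1 : IsUnit (x + J) := by
    rw [spectrum.notMem_iff] at hnotmem
    have : algebraMap ℂ A (-Complex.I) - x = -(x + J) := by
      rw [map_neg]; ring
    rw [this] at hnotmem
    exact (IsUnit.neg_iff _).mp hnotmem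
  set v : A := Ring.inverse (x + J) with hv
  have e1 : v * (x + J) = 1 := Ring.inverse_mul_cancel _ hu1
  have e2 : star v * (x - J) = 1 := by
    have := congrArg star e1
    rw [star_mul, star_one, star_add, hx, hstarJ] at this
    rw [mul_comm] at this
    convert this using 2
    ring
  set u : A := (x - J) * v with hu
  have hstaru : star u = (x + J) * star v := by
    rw [hu, star_mul, star_sub, hx, hstarJ, sub_neg_eq_add, mul_comm]
  have humem : u ∈ unitary A := by
    rw [Unitary.mem_iff]
    constructor
    · rw [hstaru, hu]
      calc (x + J) * star v * ((x - J) * v) = (star v * (x - J)) * (v * (x + J)) := by ring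
      _ = 1 := by rw [e1, e2, one_mul]
    · rw [hstaru, hu]
      calc (x - J) * v * ((x + J) * star v) = (star v * (x - J)) * (v * (x + J)) := by ring
      _ = 1 := by rw [e1, e2, one_mul]
  have hu_xJ : u * (x + J) = x - J := by
    rw [hu, mul_assoc, e1, mul_one]
  have hc_xJ : (1 - u) * (x + J) = J + J := by
    rw [sub_mul, one_mul, hu_xJ]; ring
  have hJJ : IsUnit (J + J) := by
    have : (J + J) = algebraMap ℂ A (2 * Complex.I) := by
      rw [hJ, ← map_add]; ring_nf
    rw [this]
    exact (IsUnit.map (algebraMap ℂ A) (by simp [Complex.ext_iff] : IsUnit (2 * Complex.I)))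
  have hc : IsUnit (1 - u) := by
    have := hc_xJ ▸ hJJ
    exact isUnit_of_mul_isUnit_left this
  refine ⟨J * (1 + u), 1 - u, ?_, ?_, hc, ?_⟩
  · have : J * (1 + u) = Complex.I • (1 : A) + Complex.I • u := by
      simp [mul_add, Algebra.smul_def, hJ]
    rw [this]
    exact add_mem (Submodule.smul_mem _ _ (Submodule.subset_span (one_mem (unitary A))))
      (Submodule.smul_mem _ _ (Submodule.subset_span humem))
  · exact sub_mem (Submodule.subset_span (one_mem (unitary A))) (Submodule.subset_span humem)
  · apply hu1.mul_left_cancel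
    rw [mul_comm (x + J) _, mul_comm (x + J) _]
    calc (1 - u) * x * (x + J) = x * ((1 - u) * (x + J)) := by ring
    _ = x * (J + J) := by rw [hc_xJ]
    _ = J * ((x + J) + (x - J)) := by ring
    _ = J * ((x + J) + u * (x + J)) := by rw [hu_xJ]
    _ = J * (1 + u) * (x + J) := by ring

theorem stmt15 {A : Type*} [CommRing A] [Algebra ℂ A] [StarRing A] [StarModule ℂ A]
    (hHerm : ∀ a : A, star a = a → ∀ z ∈ spectrum ℂ a, z.im = 0)
    (a : A) :
    ∃ b c : A, b ∈ Submodule.span ℂ ((unitary A : Set A)) ∧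
      c ∈ Submodule.span ℂ ((unitary A : Set A)) ∧
      IsUnit c ∧ c * a = b := by
  set J : A := algebraMap ℂ A Complex.I with hJ
  set x : A := (2 : ℂ)⁻¹ • (a + star a) with hxdef
  set y : A := (2 * Complex.I)⁻¹ • (a - star a) with hydef
  have hx : star x = x := by
    rw [hxdef, star_smul, star_add, star_star, add_comm]
    congr 1
    simp [Complex.ext_iff]
  have hy : star y = y := by
    rw [hydef, star_smul, star_sub, star_star]
    have h1 : star ((2 * Complex.I)⁻¹ : ℂ) = -(2 * Complex.I)⁻¹ := by
      rw [Complex.star_def, map_inv₀, map_mul, Complex.conj_I, Complex.conj_ofNat, mul_neg,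
        inv_neg]
    rw [h1, neg_smul, ← smul_neg, neg_sub]
  have ha : a = x + J * y := by
    rw [hxdef, hydef, hJ, ← Algebra.smul_def, smul_smul]
    have : Complex.I * (2 * Complex.I)⁻¹ = (2 : ℂ)⁻¹ := by
      field_simp
    rw [this, ← smul_add]
    have : a + star a + (a - star a) = (2 : ℂ) • a := by
      rw [two_smul]; ring
    rw [this, smul_smul]
    norm_num
  obtain ⟨b₁, c₁, hb₁, hc₁, hu₁, h₁⟩ := key_selfadjoint hHerm x hx
  obtain ⟨b₂, c₂, hb₂, hc₂, hu₂, h₂⟩ := key_selfadjoint hHerm y hy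
  refine ⟨b₁ * c₂ + J * (b₂ * c₁), c₁ * c₂, ?_, span_unitary_mul_mem hc₁ hc₂, hu₁.mul hu₂, ?_⟩
  · refine add_mem (span_unitary_mul_mem hb₁ hc₂) ?_
    rw [← Algebra.smul_def]
    exact Submodule.smul_mem _ _ (span_unitary_mul_mem hb₂ hc₁)
  · rw [ha]
    linear_combination c₂ * h₁ + J * c₁ * h₂
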